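/- Let T be a tree on n vertices, let Δ ≥ 2 be an integer, and let T_c be the core tree of T with parameter Δ. Then: (i) T_c is a tree containing at least one vertex; (ii) w_e(x) ≥ n/Δ for every edge e = xy of T_c; (iii) Δ(T_c) ≤ Δ; (iv) every component subtree T' of T − T_c satisfies |T'| ≤ n/Δ. -/

import Mathlib

/-- `v` lies on the (unique) path from `x` to `y` in `T`. -/
def OnPath {V : Type*} (T : SimpleGraph V) (x y v : V) : Prop :=
  ∀ p : T.Walk x y, p.IsPath → v ∈ p.support

/-- The weight `w_e(x)` of the edge `e = xy` from `x`: the number of vertices `z ≠ x`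
whose path from `x` starts along `e`, i.e. passes through `y`. -/
noncomputable def edgeWeight {V : Type*} (T : SimpleGraph V) (x y : V) : ℕ :=
  ({z : V | z ≠ x ∧ OnPath T x z y} : Set V).ncard

/-- The set of `Δ`-core vertices of `T`. -/
def coreSet {V : Type*} [Fintype V] (T : SimpleGraph V) (Δ : ℕ) : Set V :=
  {x : V | ∀ y : V, T.Adj x y →
    (edgeWeight T x y : ℝ) ≤ (1 - 1 / (Δ : ℝ)) * (Fintype.card V : ℝ)}

open SimpleGraph

namespace CoreAux

open scoped Classical

variable {V : Type} {T : SimpleGraph V}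

noncomputable def P (hT : T.IsTree) (x y : V) : T.Walk x y :=
  (hT.existsUnique_path x y).choose

lemma P_isPath (hT : T.IsTree) (x y : V) : (P hT x y).IsPath :=
  (hT.existsUnique_path x y).choose_spec.1

lemma P_unique (hT : T.IsTree) {x y : V} (p : T.Walk x y) (hp : p.IsPath) :
    p = P hT x y :=
  (hT.existsUnique_path x y).choose_spec.2 p hp

lemma onPath_iff (hT : T.IsTree) {x z y : V} :
    OnPath T x z y ↔ y ∈ (P hT x z).support :=
  ⟨fun h => h _ (P_isPath hT x z), fun h p hp => (P_unique hT p hp) ▸ h⟩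

/-- The branch at `x` through `y`. -/
def B (hT : T.IsTree) (x y : V) : Set V := {z | z ≠ x ∧ y ∈ (P hT x z).support}

lemma edgeWeight_eq (hT : T.IsTree) (x y : V) :
    edgeWeight T x y = (B hT x y).ncard := by
  unfold edgeWeight B
  congr 1
  ext z
  simp [onPath_iff hT]

/-- If `q` is a path from `y` containing a neighbor `z` of `y`, then `q` starts with the
edge `yz`. -/
lemma eq_cons_of_mem_support (hT : T.IsTree) {y z w : V} (h : T.Adj y z)
    (q : T.Walk y w) (hq : q.IsPath) (hz : z ∈ q.support) :
    ∃ r : T.Walk z w, q = Walk.cons h r := by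
  have h1 : (q.takeUntil z hz).IsPath := hq.takeUntil hz
  have h2 : (Walk.cons h (Walk.nil : T.Walk z z)).IsPath := by
    simp [Walk.cons_isPath_iff, h.ne]
  have h3 : q.takeUntil z hz = Walk.cons h Walk.nil :=
    (hT.existsUnique_path y z).unique h1 h2
  refine ⟨q.dropUntil z hz, ?_⟩
  conv_lhs => rw [← q.take_spec hz, h3]
  simp

lemma second_unique {y w z₁ z₂ : V} (h₁ : T.Adj y z₁) (h₂ : T.Adj y z₂)
    (r₁ : T.Walk z₁ w) (r₂ : T.Walk z₂ w)
    (he : Walk.cons h₁ r₁ = Walk.cons h₂ r₂) : z₁ = z₂ := by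
  have := congrArg Walk.support he
  rw [Walk.support_cons, Walk.support_cons, r₁.support_eq_cons, r₂.support_eq_cons] at this
  simp only [List.cons.injEq] at this
  exact this.2.1

lemma self_mem_B (hT : T.IsTree) {x y : V} (h : T.Adj x y) : y ∈ B hT x y :=
  ⟨h.ne', Walk.end_mem_support _⟩

lemma B_compl (hT : T.IsTree) {x y : V} (h : T.Adj x y) :
    B hT x y = (B hT y x)ᶜ := by
  ext z
  constructor
  · rintro ⟨hzx, hy⟩ ⟨hzy, hx⟩
    obtain ⟨r, hr⟩ := eq_cons_of_mem_support hT h.symm (P hT y z) (P_isPath hT y z) hx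
    have hrp : r.IsPath ∧ y ∉ r.support := by
      have := P_isPath hT y z
      rw [hr, Walk.cons_isPath_iff] at this
      exact this
    have := P_unique hT r hrp.1
    rw [← this] at hy
    exact hrp.2 hy
  · intro hz
    by_cases hzy : z = y
    · subst hzy; exact self_mem_B hT h
    · have hx : x ∉ (P hT y z).support := fun hx => hz ⟨hzy, hx⟩
      have hp : (Walk.cons h (P hT y z)).IsPath := by
        rw [Walk.cons_isPath_iff]
        exact ⟨P_isPath hT y z, hx⟩
      have he := P_unique hT _ hp
      refine ⟨fun hzx => hx ?_, ?_⟩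
      · subst hzx; exact Walk.end_mem_support _
      · rw [← he, Walk.support_cons]
        exact List.mem_cons_of_mem _ (Walk.start_mem_support _)

lemma weight_add [Fintype V] (hT : T.IsTree) {x y : V} (h : T.Adj x y) :
    (B hT x y).ncard + (B hT y x).ncard = Fintype.card V := by
  rw [B_compl hT h, add_comm, Set.ncard_add_ncard_compl]
  exact Nat.card_eq_fintype_card

lemma not_self_mem_B (hT : T.IsTree) (x y : V) : x ∉ B hT x y := fun h => h.1 rfl

/-- branches nest: the branch at `y` through `z ≠ x` is inside the branch at `x` through
its neighbor `y`. -/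
lemma B_subset (hT : T.IsTree) {x y z : V} (hxy : T.Adj x y) (hyz : T.Adj y z)
    (hzx : z ≠ x) : B hT y z ⊆ B hT x y := by
  rintro w ⟨hwy, hz⟩
  obtain ⟨r, hr⟩ := eq_cons_of_mem_support hT hyz (P hT y w) (P_isPath hT y w) hz
  have hx : x ∉ (P hT y w).support := by
    intro hx
    obtain ⟨r', hr'⟩ := eq_cons_of_mem_support hT hxy.symm (P hT y w) (P_isPath hT y w) hx
    exact hzx (second_unique hyz hxy.symm r r' (hr ▸ hr'))
  have hp : (Walk.cons hxy (P hT y w)).IsPath := by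
    rw [Walk.cons_isPath_iff]; exact ⟨P_isPath hT y w, hx⟩
  have he := P_unique hT _ hp
  refine ⟨fun hwx => hx ?_, ?_⟩
  · subst hwx; exact Walk.end_mem_support _
  · rw [← he, Walk.support_cons]
    exact List.mem_cons_of_mem _ (Walk.start_mem_support _)

lemma B_ncard_lt [Fintype V] (hT : T.IsTree) {x y z : V} (hxy : T.Adj x y)
    (hyz : T.Adj y z) (hzx : z ≠ x) : (B hT y z).ncard < (B hT x y).ncard :=
  Set.ncard_lt_ncard
    ⟨B_subset hT hxy hyz hzx, fun hsub =>
      not_self_mem_B hT y z (hsub (self_mem_B hT hxy))⟩ (Set.toFinite _)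

lemma core_iff [Fintype V] (hT : T.IsTree) {Δ : ℕ} {x : V} :
    x ∈ coreSet T Δ ↔ ∀ y, T.Adj x y →
      ((B hT x y).ncard : ℝ) ≤ (1 - 1 / (Δ : ℝ)) * (Fintype.card V : ℝ) := by
  unfold coreSet
  simp only [Set.mem_setOf_eq, edgeWeight_eq hT]

lemma core_nonempty [Fintype V] (hT : T.IsTree) {Δ : ℕ} (hΔ : 2 ≤ Δ) :
    (coreSet T Δ).Nonempty := by
  have hne : Nonempty V := hT.isConnected.nonempty
  set g : V → ℕ := fun v => Finset.univ.sup fun u => if T.Adj v u then (B hT v u).ncard else 0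
    with hg
  obtain ⟨x, -, hmin⟩ :=
    Finset.exists_min_image Finset.univ g ⟨Classical.arbitrary V, Finset.mem_univ _⟩
  refine ⟨x, (core_iff hT).2 fun y hadj => ?_⟩
  by_contra hgt
  push_neg at hgt
  -- `B x y` is heavy
  have hΔR : (2 : ℝ) ≤ (Δ : ℝ) := by exact_mod_cast hΔ
  have h2 : (Fintype.card V : ℝ) / 2 ≤ (1 - 1 / (Δ : ℝ)) * (Fintype.card V : ℝ) := by
    have h1 : 1 / (Δ : ℝ) ≤ 1 / 2 := by
      apply one_div_le_one_div_of_le <;> linarith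
    nlinarith [Nat.cast_nonneg (α := ℝ) (Fintype.card V)]
  have hkey : Fintype.card V < 2 * (B hT x y).ncard := by
    have : (Fintype.card V : ℝ) < 2 * ((B hT x y).ncard : ℝ) := by linarith
    exact_mod_cast this
  have hxy_le : (B hT x y).ncard ≤ g x := by
    have := Finset.le_sup (f := fun u => if T.Adj x u then (B hT x u).ncard else 0)
      (Finset.mem_univ y)
    simp only [if_pos hadj] at this
    exact this
  have hpos : 0 < g x := lt_of_lt_of_le ((Set.ncard_pos (Set.toFinite _)).2 ⟨y, self_mem_B hT hadj⟩) hxy_le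
  have hyx : (B hT y x).ncard < (B hT x y).ncard := by
    have := weight_add hT hadj
    omega
  have hsup : g y < g x := by
    rw [hg]
    refine Finset.sup_lt_iff hpos |>.2 fun u _ => ?_
    by_cases hadj' : T.Adj y u
    · rw [if_pos hadj']
      by_cases hux : u = x
      · subst hux; exact lt_of_lt_of_le hyx hxy_le
      · exact lt_of_lt_of_le (B_ncard_lt hT hadj hadj' hux) hxy_le
    · rw [if_neg hadj']; exact hpos
  exact absurd (hmin y (Finset.mem_univ y)) (by omega)

lemma P_reverse (hT : T.IsTree) (x y : V) : P hT x y = (P hT y x).reverse :=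
  (P_unique hT _ (P_isPath hT y x).reverse).symm

lemma mem_P_comm (hT : T.IsTree) {x y s : V} (h : s ∈ (P hT x y).support) :
    s ∈ (P hT y x).support := by
  rw [P_reverse hT x y, Walk.support_reverse, List.mem_reverse] at h
  exact h

/-- If `x` is on the `v`-side of the edge `vu`, then the whole branch `B v u` is inside
the branch of `x` through the first edge of the path from `x` to `v`. -/
lemma helper (hT : T.IsTree) {x v u : V} (hxv : x ≠ v) (hadj : T.Adj v u)
    (hxu : x ∈ B hT u v) : ∃ c, T.Adj x c ∧ B hT v u ⊆ B hT x c := by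
  obtain ⟨c, hxc, t, ht⟩ := Walk.exists_eq_cons_of_ne hxv (P hT x v)
  refine ⟨c, hxc, ?_⟩
  obtain ⟨hxu', hvP⟩ := hxu
  obtain ⟨r₂, hr₂⟩ := eq_cons_of_mem_support hT hadj.symm (P hT u x) (P_isPath hT u x) hvP
  have hr₂p : r₂.IsPath ∧ u ∉ r₂.support := by
    have := P_isPath hT u x; rw [hr₂, Walk.cons_isPath_iff] at this; exact this
  have hr₂e : r₂ = P hT v x := P_unique hT _ hr₂p.1
  have hu_nvx : u ∉ (P hT v x).support := hr₂e ▸ hr₂p.2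
  have claimA : ∀ s ∈ (P hT x v).support, s ∈ B hT u v := by
    intro s hs
    have hs' : s ∈ (P hT v x).support := mem_P_comm hT hs
    rw [B_compl hT hadj.symm]
    rintro ⟨hsv, hus⟩
    have : P hT v s = (P hT v x).takeUntil s hs' :=
      (P_unique hT _ ((P_isPath hT v x).takeUntil hs')).symm
    exact hu_nvx (Walk.support_takeUntil_subset _ hs' (this ▸ hus))
  rintro w ⟨hwv, hu⟩
  obtain ⟨r, hr⟩ := eq_cons_of_mem_support hT hadj (P hT v w) (P_isPath hT v w) hu
  have hrp : r.IsPath ∧ v ∉ r.support := by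
    have := P_isPath hT v w; rw [hr, Walk.cons_isPath_iff] at this; exact this
  have claimB : ∀ s ∈ r.support, s ∈ B hT v u := by
    intro s hs
    rw [B_compl hT hadj]
    rintro ⟨hsu, hvs⟩
    have : P hT u s = r.takeUntil s hs := (P_unique hT _ (hrp.1.takeUntil hs)).symm
    exact hrp.2 (Walk.support_takeUntil_subset _ hs (this ▸ hvs))
  have hdisj : (P hT x v).support.Disjoint r.support := by
    intro s hs₁ hs₂
    have h1 := claimA s hs₁
    have h2 := claimB s hs₂
    rw [B_compl hT hadj.symm] at h1
    exact h1 h2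
  have hW : ((P hT x v).append (P hT v w)).IsPath := by
    rw [Walk.isPath_def, Walk.support_append, hr, Walk.support_cons, List.tail_cons]
    exact ((P_isPath hT x v).support_nodup).append (hrp.1.support_nodup) hdisj
  have hWe : (P hT x v).append (P hT v w) = P hT x w := P_unique hT _ hW
  have hwB : w ∈ B hT v u := ⟨hwv, hu⟩
  have hwx : w ≠ x := by
    intro hwx
    rw [B_compl hT hadj] at hwB
    exact hwB (hwx ▸ ⟨hxu', hvP⟩)
  refine ⟨hwx, ?_⟩
  rw [← hWe]
  apply Walk.subset_support_append_left
  rw [ht, Walk.support_cons]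
  exact List.mem_cons_of_mem _ (Walk.start_mem_support _)

lemma mid_core [Fintype V] (hT : T.IsTree) {Δ : ℕ} {x y v : V}
    (hx : x ∈ coreSet T Δ) (hy : y ∈ coreSet T Δ) (hv : v ∈ (P hT x y).support) :
    v ∈ coreSet T Δ := by
  by_cases hvx : v = x
  · subst hvx; exact hx
  by_cases hvy : v = y
  · subst hvy; exact hy
  rw [core_iff hT]
  intro u hadj
  have hkey : x ∈ B hT u v ∨ y ∈ B hT u v := by
    by_contra hc
    push_neg at hc
    have hx1 : x ∈ B hT v u := by
      rw [B_compl hT hadj]; exact hc.1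
    have hy1 : y ∈ B hT v u := by
      rw [B_compl hT hadj]; exact hc.2
    have hux : u ∈ (P hT v x).support := hx1.2
    have huy : u ∈ (P hT v y).support := hy1.2
    have ht1 : (P hT x y).takeUntil v hv = P hT x v :=
      P_unique hT _ ((P_isPath hT x y).takeUntil hv)
    have hd1 : (P hT x y).dropUntil v hv = P hT v y :=
      P_unique hT _ ((P_isPath hT x y).dropUntil hv)
    have hnd := (P_isPath hT x y).support_nodup
    rw [← Walk.take_spec (P hT x y) hv, Walk.support_append, ht1, hd1] at hnd
    have hdisj := List.disjoint_of_nodup_append hnd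
    have h1 : u ∈ (P hT x v).support := mem_P_comm hT hux
    have h2 : u ∈ (P hT v y).support.tail := by
      have := (P hT v y).support_eq_cons
      rw [this] at huy
      rcases List.mem_cons.1 huy with h | h
      · exact absurd h hadj.ne'
      · rw [this]; exact h
    exact hdisj h1 h2
  rcases hkey with hk | hk
  · obtain ⟨c, hxc, hsub⟩ := helper hT (fun h => hvx h.symm) hadj hk
    calc ((B hT v u).ncard : ℝ) ≤ ((B hT x c).ncard : ℝ) := by
          exact_mod_cast Set.ncard_le_ncard hsub (Set.toFinite _)
      _ ≤ _ := (core_iff hT).1 hx c hxc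
  · obtain ⟨c, hyc, hsub⟩ := helper hT (fun h => hvy h.symm) hadj hk
    calc ((B hT v u).ncard : ℝ) ≤ ((B hT y c).ncard : ℝ) := by
          exact_mod_cast Set.ncard_le_ncard hsub (Set.toFinite _)
      _ ≤ _ := (core_iff hT).1 hy c hyc

lemma reach_induce {s : Set V} {a b : V} (p : T.Walk a b)
    (h : ∀ z ∈ p.support, z ∈ s) :
    (T.induce s).Reachable ⟨a, h a p.start_mem_support⟩ ⟨b, h b p.end_mem_support⟩ := by
  induction p with
  | nil => exact Reachable.refl _
  | @cons u v w hadj q ih =>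
    have h' : ∀ z ∈ q.support, z ∈ s := fun z hz =>
      h z (by rw [Walk.support_cons]; exact List.mem_cons_of_mem _ hz)
    have hadj' : (T.induce s).Adj ⟨u, h u (Walk.start_mem_support _)⟩
        ⟨v, h' v q.start_mem_support⟩ := by
      simp only [comap_adj, Function.Embedding.coe_subtype]
      exact hadj
    exact (hadj'.reachable).trans (ih h')

lemma coreTree [Fintype V] (hT : T.IsTree) {Δ : ℕ} (hΔ : 2 ≤ Δ) :
    (T.induce (coreSet T Δ)).IsTree := by
  obtain ⟨x₀, hx₀⟩ := core_nonempty hT hΔ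
  haveI : Nonempty ↥(coreSet T Δ) := ⟨⟨x₀, hx₀⟩⟩
  constructor
  · refine ⟨fun a b => ?_⟩
    · have hall : ∀ z ∈ (P hT a.1 b.1).support, z ∈ coreSet T Δ := fun z hz =>
        mid_core hT a.2 b.2 hz
      have := reach_induce (P hT a.1 b.1) hall
      simpa using this
  · intro v c hc
    have hinj : Function.Injective
        ⇑((SimpleGraph.Embedding.induce (s := coreSet T Δ) (G := T)).toHom) := fun a b hab =>
      Subtype.ext hab
    exact hT.IsAcyclic _ ((Walk.map_isCycle_iff_of_injective hinj).2 hc)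

lemma part2 [Fintype V] (hT : T.IsTree) {Δ : ℕ} (hΔ : 2 ≤ Δ) {x y : V}
    (hx : x ∈ coreSet T Δ) (hy : y ∈ coreSet T Δ) (hadj : T.Adj x y) :
    ((Fintype.card V : ℝ)) / (Δ : ℝ) ≤ (edgeWeight T x y : ℝ) := by
  rw [edgeWeight_eq hT]
  have hsum : ((B hT x y).ncard : ℝ) + ((B hT y x).ncard : ℝ) = (Fintype.card V : ℝ) := by
    exact_mod_cast weight_add hT hadj
  have hyx := (core_iff hT).1 hy x hadj.symm
  have hΔ0 : (Δ : ℝ) ≠ 0 := Nat.cast_ne_zero.2 (by omega)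
  have key : (Fintype.card V : ℝ) / Δ = Fintype.card V - (1 - 1 / (Δ : ℝ)) * Fintype.card V := by
    field_simp
    ring
  linarith

lemma part3 [Fintype V] (hT : T.IsTree) {Δ : ℕ} (hΔ : 2 ≤ Δ) {x : V}
    (hx : x ∈ coreSet T Δ) :
    ({y ∈ coreSet T Δ | T.Adj x y} : Set V).ncard ≤ Δ := by
  have hne : Nonempty V := hT.isConnected.nonempty
  set S : Finset V := Finset.univ.filter (fun y => y ∈ coreSet T Δ ∧ T.Adj x y) with hS
  have hset : ({y ∈ coreSet T Δ | T.Adj x y} : Set V) = ↑S := by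
    ext y; simp [hS]
  rw [hset, Set.ncard_coe_finset]
  -- the branches `B x y`, `y ∈ S`, are pairwise disjoint and avoid `x`
  have hdisj : ∀ y₁ ∈ S, ∀ y₂ ∈ S, y₁ ≠ y₂ →
      Disjoint ((B hT x y₁).toFinset) ((B hT x y₂).toFinset) := by
    intro y₁ h₁ y₂ h₂ hne12
    simp only [hS, Finset.mem_filter] at h₁ h₂
    rw [Finset.disjoint_left]
    intro z hz₁ hz₂
    rw [Set.mem_toFinset] at hz₁ hz₂
    obtain ⟨hzx, hy₁⟩ := hz₁
    obtain ⟨-, hy₂⟩ := hz₂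
    obtain ⟨r₁, hr₁⟩ := eq_cons_of_mem_support hT h₁.2.2 (P hT x z) (P_isPath hT x z) hy₁
    obtain ⟨r₂, hr₂⟩ := eq_cons_of_mem_support hT h₂.2.2 (P hT x z) (P_isPath hT x z) hy₂
    exact hne12 (second_unique h₁.2.2 h₂.2.2 r₁ r₂ (hr₁ ▸ hr₂))
  have hsum : ∑ y ∈ S, ((B hT x y).toFinset).card ≤ Fintype.card V - 1 := by
    rw [← Finset.card_biUnion hdisj]
    have hsub : (S.biUnion fun y => (B hT x y).toFinset) ⊆ Finset.univ.erase x := by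
      intro z hz
      rw [Finset.mem_biUnion] at hz
      obtain ⟨y, -, hzy⟩ := hz
      rw [Set.mem_toFinset] at hzy
      exact Finset.mem_erase.2 ⟨hzy.1, Finset.mem_univ _⟩
    calc (S.biUnion fun y => (B hT x y).toFinset).card ≤ (Finset.univ.erase x).card :=
          Finset.card_le_card hsub
      _ = Fintype.card V - 1 := by rw [Finset.card_erase_of_mem (Finset.mem_univ x),
          Finset.card_univ]
  -- each branch has at least `n/Δ` vertices
  have hcard1 : 1 ≤ Fintype.card V := Fintype.card_pos
  have hΔ0 : (0:ℝ) < (Δ : ℝ) := by exact_mod_cast (by omega : 0 < Δ)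
  have hlow : ∀ y ∈ S, (Fintype.card V : ℝ) / Δ ≤ ((B hT x y).toFinset.card : ℝ) := by
    intro y hy
    simp only [hS, Finset.mem_filter] at hy
    have := part2 hT hΔ hx hy.2.1 hy.2.2
    rw [edgeWeight_eq hT] at this
    rwa [← Set.ncard_eq_toFinset_card']
  have hsumR : (S.card : ℝ) * ((Fintype.card V : ℝ) / Δ) ≤ (Fintype.card V : ℝ) - 1 := by
    calc (S.card : ℝ) * ((Fintype.card V : ℝ) / Δ)
        = S.card • ((Fintype.card V : ℝ) / Δ) := (nsmul_eq_mul _ _).symm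
      _ ≤ ∑ y ∈ S, (((B hT x y).toFinset.card : ℕ) : ℝ) := Finset.card_nsmul_le_sum S _ _ hlow
      _ = ((∑ y ∈ S, (B hT x y).toFinset.card : ℕ) : ℝ) := by push_cast; ring
      _ ≤ (Fintype.card V : ℝ) - 1 := by
          have h := (Nat.cast_le (α := ℝ)).2 hsum
          rw [Nat.cast_sub hcard1] at h
          simpa using h
  by_contra hgt
  push_neg at hgt
  have hc1 : (Δ:ℝ) + 1 ≤ (S.card : ℝ) := by exact_mod_cast hgt
  have hq : (0:ℝ) ≤ (Fintype.card V : ℝ)/Δ := by positivity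
  have h1 : ((Δ:ℝ)+1) * ((Fintype.card V : ℝ)/Δ) ≤ (S.card:ℝ) * ((Fintype.card V : ℝ)/Δ) :=
    mul_le_mul_of_nonneg_right hc1 hq
  have hn1 : (1:ℝ) ≤ (Fintype.card V : ℝ) := by exact_mod_cast hcard1
  have hexp : ((Δ:ℝ)+1) * ((Fintype.card V : ℝ)/Δ) =
      (Fintype.card V : ℝ) + (Fintype.card V : ℝ)/Δ := by
    field_simp
  linarith

lemma part4 [Fintype V] (hT : T.IsTree) {Δ : ℕ} (hΔ : 2 ≤ Δ) (s : Set V)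
    (hsdef : s = (coreSet T Δ)ᶜ) (c : (T.induce s).ConnectedComponent) :
    (c.supp.ncard : ℝ) ≤ (Fintype.card V : ℝ) / (Δ : ℝ) := by
  have hCeq : c.supp.ncard = (Subtype.val '' c.supp).ncard :=
    (Set.ncard_image_of_injective c.supp Subtype.val_injective).symm
  have hmem : ∀ z : V, z ∈ Subtype.val '' c.supp ↔ ∃ hz : z ∈ s, (⟨z, hz⟩ : ↥s) ∈ c.supp := by
    intro z
    simp only [Set.mem_image, Subtype.exists]
    constructor
    · rintro ⟨a, ha, h1, rfl⟩; exact ⟨_, h1⟩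
    · rintro ⟨hz, h1⟩; exact ⟨z, hz, h1, rfl⟩
  -- every vertex on a path between two component members is non-core
  have fact1 : ∀ (z₁ z₂ : ↥s), z₁ ∈ c.supp → z₂ ∈ c.supp →
      ∀ w ∈ (P hT z₁.1 z₂.1).support, w ∈ s := by
    intro z₁ z₂ h₁ h₂ w hw
    rw [ConnectedComponent.mem_supp_iff] at h₁ h₂
    have hreach : (T.induce s).Reachable z₁ z₂ := ConnectedComponent.exact (h₁.trans h₂.symm)
    obtain ⟨W'⟩ := hreach
    have hbp : (W'.map (SimpleGraph.Embedding.induce s).toHom).bypass = P hT z₁.1 z₂.1 :=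
      P_unique hT _ (Walk.bypass_isPath _)
    have hsub : w ∈ (W'.map (SimpleGraph.Embedding.induce s).toHom).support :=
      Walk.support_bypass_subset _ (hbp ▸ hw)
    rw [Walk.support_map, List.mem_map] at hsub
    obtain ⟨u, -, rfl⟩ := hsub
    exact u.2
  -- heavy-branch witnesses for non-core vertices
  have heavy : ∀ v : V, v ∈ s → ∃ u, T.Adj v u ∧
      (1 - 1 / (Δ : ℝ)) * (Fintype.card V : ℝ) < ((B hT v u).ncard : ℝ) := by
    intro v hv
    have h1 : ¬ (v ∈ coreSet T Δ) := by rw [hsdef] at hv; exact hv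
    rw [core_iff hT] at h1
    push_neg at h1
    exact h1
  obtain ⟨z₀, hz₀⟩ := c.exists_rep
  have hz₀s : z₀ ∈ c.supp := (ConnectedComponent.mem_supp_iff c z₀).2 hz₀
  have hz₀C : (z₀ : V) ∈ Subtype.val '' c.supp := (hmem _).2 ⟨z₀.2, by simpa using hz₀s⟩
  have hHne : ({m : ℕ | ∃ v u, v ∈ Subtype.val '' c.supp ∧ T.Adj v u ∧
      (1 - 1 / (Δ : ℝ)) * (Fintype.card V : ℝ) < ((B hT v u).ncard : ℝ) ∧
      (B hT v u).ncard = m}).Nonempty := by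
    obtain ⟨u, hadj, hh⟩ := heavy z₀.1 z₀.2
    exact ⟨_, z₀.1, u, hz₀C, hadj, hh, rfl⟩
  obtain ⟨v, u, hvC, hadj, hheavy, hm⟩ := Nat.sInf_mem hHne
  -- real-arithmetic facts
  have hΔ0 : (0:ℝ) < (Δ:ℝ) := by exact_mod_cast (by omega : 0 < Δ)
  have hΔR : (2:ℝ) ≤ (Δ:ℝ) := by exact_mod_cast hΔ
  have hhalf : (Fintype.card V : ℝ) / 2 ≤ (1 - 1 / (Δ : ℝ)) * (Fintype.card V : ℝ) := by
    have h1 : 1 / (Δ : ℝ) ≤ 1 / 2 := by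
      apply one_div_le_one_div_of_le <;> linarith
    nlinarith [Nat.cast_nonneg (α := ℝ) (Fintype.card V)]
  have hvu_sum : ((B hT v u).ncard : ℝ) + ((B hT u v).ncard : ℝ) = (Fintype.card V : ℝ) := by
    exact_mod_cast weight_add hT hadj
  -- the component is contained in the light side of the minimal heavy edge
  have hsubset : Subtype.val '' c.supp ⊆ B hT u v := by
    intro z hz
    rw [B_compl hT hadj.symm]
    rintro ⟨hzv, huz⟩
    obtain ⟨hvs, hvsupp⟩ := (hmem v).1 hvC
    obtain ⟨hzs, hzsupp⟩ := (hmem z).1 hz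
    have hus : u ∈ s := fact1 ⟨v, hvs⟩ ⟨z, hzs⟩ hvsupp hzsupp u huz
    have hadj' : (T.induce s).Adj ⟨v, hvs⟩ ⟨u, hus⟩ := by
      simp only [comap_adj, Function.Embedding.coe_subtype]
      exact hadj
    have huC : u ∈ Subtype.val '' c.supp := by
      refine (hmem u).2 ⟨hus, ?_⟩
      rw [ConnectedComponent.mem_supp_iff] at hvsupp ⊢
      rw [← hvsupp]
      exact ConnectedComponent.sound hadj'.symm.reachable
    obtain ⟨t, hut, hth⟩ := heavy u hus
    have htv : t ≠ v := by
      rintro rfl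
      nlinarith
    have hlt : (B hT u t).ncard < (B hT v u).ncard := B_ncard_lt hT hadj hut htv
    have hge := Nat.sInf_le (show (B hT u t).ncard ∈ {m : ℕ | ∃ v u,
        v ∈ Subtype.val '' c.supp ∧ T.Adj v u ∧
        (1 - 1 / (Δ : ℝ)) * (Fintype.card V : ℝ) < ((B hT v u).ncard : ℝ) ∧
        (B hT v u).ncard = m} from ⟨u, t, huC, hut, hth, rfl⟩)
    omega
  have hle : ((Subtype.val '' c.supp).ncard : ℝ) ≤ ((B hT u v).ncard : ℝ) := by
    exact_mod_cast Set.ncard_le_ncard hsubset (Set.toFinite _)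
  have hfin : ((B hT u v).ncard : ℝ) ≤ (Fintype.card V : ℝ) / Δ := by
    have key : (Fintype.card V : ℝ) / Δ
        = Fintype.card V - (1 - 1 / (Δ : ℝ)) * Fintype.card V := by
      field_simp
      ring
    linarith
  rw [hCeq]
  linarith

end CoreAux

/-- Properties of the core tree `T_c` of a tree `T` on `n` vertices
with parameter `Δ ≥ 2`: (i) it is a nonempty tree; (ii) each of its edges has weight at
least `n/Δ` from either endvertex; (iii) it has maximum degree at most `Δ`; (iv) every
component of `T − T_c` has at most `n/Δ` vertices. -/


theorem core_tree_properties :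
    ∀ (V : Type) [Fintype V], ∀ (T : SimpleGraph V) (n Δ : ℕ),
      T.IsTree → Fintype.card V = n → 2 ≤ Δ →
      ((coreSet T Δ).Nonempty ∧ (T.induce (coreSet T Δ)).IsTree) ∧
      (∀ x ∈ coreSet T Δ, ∀ y ∈ coreSet T Δ, T.Adj x y →
        (n : ℝ) / (Δ : ℝ) ≤ (edgeWeight T x y : ℝ)) ∧
      (∀ x ∈ coreSet T Δ, ({y ∈ coreSet T Δ | T.Adj x y} : Set V).ncard ≤ Δ) ∧
      (∀ c : (T.induce (coreSet T Δ)ᶜ).ConnectedComponent,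
        (c.supp.ncard : ℝ) ≤ (n : ℝ) / (Δ : ℝ)) := by
  intro V _ T n Δ hT hn hΔ
  subst hn
  exact ⟨⟨CoreAux.core_nonempty hT hΔ, CoreAux.coreTree hT hΔ⟩,
    fun x hx y hy hadj => CoreAux.part2 hT hΔ hx hy hadj,
    fun x hx => CoreAux.part3 hT hΔ hx,
    fun c => CoreAux.part4 hT hΔ _ rfl c⟩
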